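/- Let (S,T) be a Cuntz-type representation of F_θ^+ on H (m ≥ 2 or n ≥ 2) and let 𝔖 be the unital WOT-closed algebra it generates. If there exist k,l > 0 such that the unital WOT-closed algebra 𝔖_{k,l} generated by {S_uT_v : |u|=k, |v|=l} is self-adjoint, then 𝔖 is self-adjoint. -/

import Mathlib

noncomputable section

open scoped InnerProductSpace ComplexInnerProductSpace Classical

section GeneralDefs

variable {E : Type*} [NormedAddCommGroup E] [InnerProductSpace ℂ E]

/-- The operator associated to a word: `wordOp V [a₁, …, a_r] = V a₁ * ⋯ * V a_r`. -/
def wordOp {ι : Type*} (V : ι → E →L[ℂ] E) (w : List ι) : E →L[ℂ] E :=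
  (w.map V).prod

/-- The operator associated to a word of fixed length `k` given as a function `Fin k → ι`. -/
def fnWordOp {ι : Type*} {k : ℕ} (V : ι → E →L[ℂ] E) (u : Fin k → ι) : E →L[ℂ] E :=
  wordOp V (List.ofFn u)

/-- The closure of a set of operators in the weak operator topology, described via
basic WOT-neighbourhoods (finitely many vector functionals). -/
def wotClosure (S : Set (E →L[ℂ] E)) : Set (E →L[ℂ] E) :=
  {A | ∀ ε > (0 : ℝ), ∀ F : Finset (E × E), ∃ B ∈ S, ∀ p ∈ F, ‖⟪p.1, (A - B) p.2⟫‖ < ε}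

/-- The unital WOT-closed algebra generated by a set of operators. -/
def genWotAlg (G : Set (E →L[ℂ] E)) : Set (E →L[ℂ] E) :=
  wotClosure ((Algebra.adjoin ℂ G : Subalgebra ℂ (E →L[ℂ] E)) : Set (E →L[ℂ] E))

/-- A wandering vector for a row-isometry `V = [V_a : a ∈ ι]`: a unit vector whose orbit
under all words in the `V_a` is an orthonormal family. -/
def IsWandering {ι : Type*} (V : ι → E →L[ℂ] E) (ζ : E) : Prop :=
  ‖ζ‖ = 1 ∧ ∀ w w' : List ι,
    ⟪wordOp V w ζ, wordOp V w' ζ⟫ = if w = w' then 1 else 0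

/-- Restriction of an operator to an invariant subspace (junk value `0` if not invariant). -/
def restrictCLM (A : E →L[ℂ] E) (M : Submodule ℂ E) : M →L[ℂ] M :=
  if h : ∀ x ∈ M, A x ∈ M then
    { toFun := fun x => ⟨A x, h x x.2⟩
      map_add' := by intro x y; ext; simp
      map_smul' := by intro c x; ext; simp
      cont := Continuous.subtype_mk (A.continuous.comp continuous_subtype_val) _ }
  else 0

/-- The unital WOT-closed algebra on `M` generated by the restrictions of the `V a` to `M`. -/
def rowAlgOn {ι : Type*} (V : ι → E →L[ℂ] E) (M : Submodule ℂ E) : Set (M →L[ℂ] M) :=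
  genWotAlg (Set.range fun a => restrictCLM (V a) M)

/-- The unital WOT-closed algebra on `M` generated by the restrictions of the `V a`
is self-adjoint. -/
def restrictedAlgSelfAdjoint {ι : Type*} (V : ι → E →L[ℂ] E) (M : Submodule ℂ E) : Prop :=
  ∀ A ∈ rowAlgOn V M, ∃ B ∈ rowAlgOn V M,
    ∀ x y : M, ⟪((A x : M) : E), (y : E)⟫ = ⟪(x : E), ((B y : M) : E)⟫

variable [CompleteSpace E]

/-- A row-isometry is of dilation type if it is defect free and has no nonzero reducing
subspace on which it is either absolutely continuous (spanned by wandering vectors) or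
singular (generating a self-adjoint WOT-closed algebra). -/
def IsDilationType {ι : Type*} [Fintype ι] (V : ι → E →L[ℂ] E) : Prop :=
  (∑ a, V a * star (V a)) = 1 ∧
    ¬ ∃ M : Submodule ℂ E, M ≠ ⊥ ∧ IsClosed (M : Set E) ∧
      (∀ a, ∀ x ∈ M, V a x ∈ M) ∧ (∀ a, ∀ x ∈ M, star (V a) x ∈ M) ∧
      ((M = (Submodule.span ℂ {ζ : E | ζ ∈ M ∧ IsWandering V ζ}).topologicalClosure) ∨
        restrictedAlgSelfAdjoint V M)

end GeneralDefs

/-- An isometric representation of the single-vertex 2-graph `F_θ⁺` on a Hilbert space `H`. -/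
structure TwoGraphRep (m n : ℕ) (θ : Equiv.Perm (Fin m × Fin n)) (H : Type*)
    [NormedAddCommGroup H] [InnerProductSpace ℂ H] [CompleteSpace H] where
  S : Fin m → H →L[ℂ] H
  T : Fin n → H →L[ℂ] H
  isometS : ∀ i i', star (S i) * S i' = if i = i' then 1 else 0
  isometT : ∀ j j', star (T j) * T j' = if j = j' then 1 else 0
  comm : ∀ i j, S i * T j = T (θ (i, j)).2 * S (θ (i, j)).1

namespace TwoGraphRep

variable {m n : ℕ} {θ : Equiv.Perm (Fin m × Fin n)} {H : Type*}
  [NormedAddCommGroup H] [InnerProductSpace ℂ H] [CompleteSpace H]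

/-- A representation is of Cuntz type if both row-isometries are defect free. -/
def CuntzType (ρ : TwoGraphRep m n θ H) : Prop :=
  (∑ i, ρ.S i * star (ρ.S i)) = 1 ∧ (∑ j, ρ.T j * star (ρ.T j)) = 1

/-- The nonself-adjoint 2-graph algebra `𝔖`: the unital WOT-closed algebra generated by
the `S_i` and `T_j`. -/
def alg (ρ : TwoGraphRep m n θ H) : Set (H →L[ℂ] H) :=
  genWotAlg (Set.range ρ.S ∪ Set.range ρ.T)

/-- The von Neumann algebra generated by the `S_i` and `T_j`: the WOT-closure of the
unital *-algebra they generate. -/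
def vnAlg (ρ : TwoGraphRep m n θ H) : Set (H →L[ℂ] H) :=
  genWotAlg ((Set.range ρ.S ∪ Set.range ρ.T) ∪ star '' (Set.range ρ.S ∪ Set.range ρ.T))

/-- Wandering vector for the row-isometry `[S_u T_v : |u| = k, |v| = l]`. -/
def IsWanderingKL (ρ : TwoGraphRep m n θ H) (k l : ℕ) (ζ : H) : Prop :=
  ‖ζ‖ = 1 ∧ ∀ (p p' : ℕ) (u u' : List (Fin m)) (v v' : List (Fin n)),
    u.length = p * k → v.length = p * l → u'.length = p' * k → v'.length = p' * l →
    ⟪(wordOp ρ.S u * wordOp ρ.T v) ζ, (wordOp ρ.S u' * wordOp ρ.T v') ζ⟫ =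
      if u = u' ∧ v = v' then 1 else 0

/-- The range of the structure projection `P_{k,l}`: the orthogonal complement of the
closed linear span of the wandering vectors of `[S_u T_v : |u| = k, |v| = l]`. -/
def structSpaceKL (ρ : TwoGraphRep m n θ H) (k l : ℕ) : Submodule ℂ H :=
  ((Submodule.span ℂ {ζ : H | ρ.IsWanderingKL k l ζ}).topologicalClosure)ᗮ

/-- The range of the first structure projection `P = ⋀_{k,l>0} P_{k,l}`. -/
def firstStructSpace (ρ : TwoGraphRep m n θ H) : Submodule ℂ H :=
  ⨅ (k : ℕ) (l : ℕ) (_ : 0 < k) (_ : 0 < l), ρ.structSpaceKL k l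

/-- The row-isometry `[S_u T_v : |u| = k, |v| = l]`. -/
def rowKL (ρ : TwoGraphRep m n θ H) (k l : ℕ) :
    ((Fin k → Fin m) × (Fin l → Fin n)) → H →L[ℂ] H :=
  fun p => fnWordOp ρ.S p.1 * fnWordOp ρ.T p.2

/-- A wandering vector for the representation `(S,T)`. -/
def IsWanderingRep (ρ : TwoGraphRep m n θ H) (ζ : H) : Prop :=
  ‖ζ‖ = 1 ∧ ∀ (u u' : List (Fin m)) (v v' : List (Fin n)),
    ⟪(wordOp ρ.S u * wordOp ρ.T v) ζ, (wordOp ρ.S u' * wordOp ρ.T v') ζ⟫ =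
      if u = u' ∧ v = v' then 1 else 0

/-- The representation is irreducible: the only closed subspaces invariant under all
`S_i, T_j, S_i*, T_j*` are `⊥` and `⊤`. -/
def Irreducible (ρ : TwoGraphRep m n θ H) : Prop :=
  ∀ M : Submodule ℂ H, IsClosed (M : Set H) →
    (∀ i, ∀ x ∈ M, ρ.S i x ∈ M) → (∀ i, ∀ x ∈ M, star (ρ.S i) x ∈ M) →
    (∀ j, ∀ x ∈ M, ρ.T j x ∈ M) → (∀ j, ∀ x ∈ M, star (ρ.T j) x ∈ M) →
    M = ⊥ ∨ M = ⊤

/-- The representation is atomic with standard basis `ξ`: every generator maps each basis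
vector to a unimodular multiple of a basis vector. -/
def AtomicBasis {Λ : Type*} (ρ : TwoGraphRep m n θ H) (ξ : HilbertBasis Λ ℂ H) : Prop :=
  (∀ i t, ∃ (c : ℂ) (t' : Λ), ‖c‖ = 1 ∧ ρ.S i (ξ t) = c • ξ t') ∧
  (∀ j t, ∃ (c : ℂ) (t' : Λ), ‖c‖ = 1 ∧ ρ.T j (ξ t) = c • ξ t')

/-- `x` has a blue ring: `S_u x ∈ 𝕋x` for some nonempty word `u`. -/
def HasBlueRing (ρ : TwoGraphRep m n θ H) (x : H) : Prop :=
  ∃ u : List (Fin m), u ≠ [] ∧ ∃ c : ℂ, ‖c‖ = 1 ∧ wordOp ρ.S u x = c • x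

/-- `x` has a red ring: `T_v x ∈ 𝕋x` for some nonempty word `v`. -/
def HasRedRing (ρ : TwoGraphRep m n θ H) (x : H) : Prop :=
  ∃ v : List (Fin n), v ≠ [] ∧ ∃ c : ℂ, ‖c‖ = 1 ∧ wordOp ρ.T v x = c • x

/-- `x` has a mixed ring: `T_v S_u x ∈ 𝕋x` for some nonempty words `u`, `v`. -/
def HasMixedRing (ρ : TwoGraphRep m n θ H) (x : H) : Prop :=
  ∃ (u : List (Fin m)) (v : List (Fin n)), u ≠ [] ∧ v ≠ [] ∧
    ∃ c : ℂ, ‖c‖ = 1 ∧ wordOp ρ.T v (wordOp ρ.S u x) = c • x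

end TwoGraphRep

section Aux14

variable {E : Type*} [NormedAddCommGroup E] [InnerProductSpace ℂ E]

lemma aux_subset_wotClosure (S : Set (E →L[ℂ] E)) : S ⊆ wotClosure S := by
  intro A hA ε hε F
  exact ⟨A, hA, fun p _ => by simp [hε]⟩

lemma aux_wotClosure_mono {S T : Set (E →L[ℂ] E)} (h : S ⊆ T) :
    wotClosure S ⊆ wotClosure T := by
  intro A hA ε hε F
  obtain ⟨B, hB, hb⟩ := hA ε hε F
  exact ⟨B, h hB, hb⟩

lemma aux_wotClosure_idem {S : Set (E →L[ℂ] E)} :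
    wotClosure (wotClosure S) ⊆ wotClosure S := by
  intro A hA ε hε F
  obtain ⟨B, hB, h1⟩ := hA (ε/2) (by linarith) F
  obtain ⟨C, hC, h2⟩ := hB (ε/2) (by linarith) F
  refine ⟨C, hC, fun p hp => ?_⟩
  have e : A - C = (A - B) + (B - C) := by abel
  calc ‖⟪p.1, (A - C) p.2⟫‖
      = ‖⟪p.1, (A - B) p.2⟫ + ⟪p.1, (B - C) p.2⟫‖ := by
        rw [e, ContinuousLinearMap.add_apply, inner_add_right]
    _ ≤ ‖⟪p.1, (A - B) p.2⟫‖ + ‖⟪p.1, (B - C) p.2⟫‖ := norm_add_le _ _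
    _ < ε := by linarith [h1 p hp, h2 p hp]

lemma aux_wotClosure_add {S : Set (E →L[ℂ] E)}
    (hS : ∀ a ∈ S, ∀ b ∈ S, a + b ∈ S) {A B : E →L[ℂ] E}
    (hA : A ∈ wotClosure S) (hB : B ∈ wotClosure S) : A + B ∈ wotClosure S := by
  intro ε hε F
  obtain ⟨A', hA', h1⟩ := hA (ε/2) (by linarith) F
  obtain ⟨B', hB', h2⟩ := hB (ε/2) (by linarith) F
  refine ⟨A' + B', hS _ hA' _ hB', fun p hp => ?_⟩
  have e : A + B - (A' + B') = (A - A') + (B - B') := by abel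
  calc ‖⟪p.1, (A + B - (A' + B')) p.2⟫‖
      = ‖⟪p.1, (A - A') p.2⟫ + ⟪p.1, (B - B') p.2⟫‖ := by
        rw [e, ContinuousLinearMap.add_apply, inner_add_right]
    _ ≤ ‖⟪p.1, (A - A') p.2⟫‖ + ‖⟪p.1, (B - B') p.2⟫‖ := norm_add_le _ _
    _ < ε := by linarith [h1 p hp, h2 p hp]

lemma aux_wotClosure_mul [CompleteSpace E] {S : Set (E →L[ℂ] E)}
    (hS : ∀ a ∈ S, ∀ b ∈ S, a * b ∈ S) {A B : E →L[ℂ] E}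
    (hA : A ∈ wotClosure S) (hB : B ∈ wotClosure S) : A * B ∈ wotClosure S := by
  intro ε hε F
  obtain ⟨A', hA', h1⟩ := hA (ε/2) (by linarith) (F.image fun p => (p.1, B p.2))
  obtain ⟨B', hB', h2⟩ := hB (ε/2) (by linarith)
    (F.image fun p => (ContinuousLinearMap.adjoint A' p.1, p.2))
  refine ⟨A' * B', hS _ hA' _ hB', fun p hp => ?_⟩
  have e : A * B - A' * B' = (A - A') * B + A' * (B - B') := by
    simp [sub_mul, mul_sub]
  have t1 : ‖⟪p.1, (A - A') (B p.2)⟫‖ < ε/2 :=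
    h1 (p.1, B p.2) (Finset.mem_image_of_mem _ hp)
  have t2 : ‖⟪ContinuousLinearMap.adjoint A' p.1, (B - B') p.2⟫‖ < ε/2 :=
    h2 (ContinuousLinearMap.adjoint A' p.1, p.2) (Finset.mem_image_of_mem _ hp)
  calc ‖⟪p.1, (A * B - A' * B') p.2⟫‖
      = ‖⟪p.1, (A - A') (B p.2)⟫ + ⟪p.1, A' ((B - B') p.2)⟫‖ := by
        rw [e]
        simp only [ContinuousLinearMap.add_apply, ContinuousLinearMap.mul_apply,
          inner_add_right]
    _ ≤ ‖⟪p.1, (A - A') (B p.2)⟫‖ + ‖⟪p.1, A' ((B - B') p.2)⟫‖ := norm_add_le _ _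
    _ < ε := by
        have t3 : ⟪p.1, A' ((B - B') p.2)⟫ =
            ⟪ContinuousLinearMap.adjoint A' p.1, (B - B') p.2⟫ :=
          (ContinuousLinearMap.adjoint_inner_left A' _ _).symm
        rw [t3]
        linarith

lemma aux_wotClosure_star [CompleteSpace E] {S : Set (E →L[ℂ] E)} {A : E →L[ℂ] E}
    (hA : A ∈ wotClosure S) : star A ∈ wotClosure (star '' S) := by
  intro ε hε F
  obtain ⟨B, hB, h⟩ := hA ε hε (F.image Prod.swap)
  refine ⟨star B, ⟨B, hB, rfl⟩, fun p hp => ?_⟩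
  have hs := h p.swap (Finset.mem_image_of_mem _ hp)
  have e : ⟪p.1, (star A - star B) p.2⟫ = ⟪(A - B) p.1, p.2⟫ := by
    rw [← star_sub, ContinuousLinearMap.star_eq_adjoint,
      ContinuousLinearMap.adjoint_inner_right]
  rw [e, norm_inner_symm]
  exact hs

lemma aux_mem_genWotAlg_of_adjoin {G : Set (E →L[ℂ] E)} {A : E →L[ℂ] E}
    (h : A ∈ Algebra.adjoin ℂ G) : A ∈ genWotAlg G :=
  aux_subset_wotClosure _ h

lemma aux_genWotAlg_le {G G' : Set (E →L[ℂ] E)}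
    (h : G ⊆ (Algebra.adjoin ℂ G' : Subalgebra ℂ (E →L[ℂ] E))) :
    genWotAlg G ⊆ genWotAlg G' :=
  aux_wotClosure_mono (fun _ hx => Algebra.adjoin_le h hx)

lemma aux_genWotAlg_add {G : Set (E →L[ℂ] E)} {A B : E →L[ℂ] E}
    (hA : A ∈ genWotAlg G) (hB : B ∈ genWotAlg G) : A + B ∈ genWotAlg G :=
  aux_wotClosure_add (fun _ ha _ hb => add_mem ha hb) hA hB

lemma aux_genWotAlg_mul [CompleteSpace E] {G : Set (E →L[ℂ] E)} {A B : E →L[ℂ] E}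
    (hA : A ∈ genWotAlg G) (hB : B ∈ genWotAlg G) : A * B ∈ genWotAlg G :=
  aux_wotClosure_mul (fun _ ha _ hb => mul_mem ha hb) hA hB

lemma aux_genWotAlg_sum {G : Set (E →L[ℂ] E)} {ι : Type*} (s : Finset ι)
    (f : ι → E →L[ℂ] E) (h : ∀ i ∈ s, f i ∈ genWotAlg G) :
    ∑ i ∈ s, f i ∈ genWotAlg G := by
  classical
  induction s using Finset.induction_on with
  | empty => simpa using aux_mem_genWotAlg_of_adjoin (zero_mem _)
  | insert _ _ hni ih =>
      rw [Finset.sum_insert hni]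
      exact aux_genWotAlg_add (h _ (Finset.mem_insert_self _ _))
        (ih fun i hi => h i (Finset.mem_insert_of_mem hi))

lemma aux_wordOp_nil {ι : Type*} (V : ι → E →L[ℂ] E) : wordOp V [] = 1 := rfl

lemma aux_wordOp_cons {ι : Type*} (V : ι → E →L[ℂ] E) (a : ι) (w : List ι) :
    wordOp V (a :: w) = V a * wordOp V w := by
  simp [wordOp]

lemma aux_fnWordOp_cons {ι : Type*} {k : ℕ} (V : ι → E →L[ℂ] E) (a : ι)
    (w : Fin k → ι) : fnWordOp V (Fin.cons a w) = V a * fnWordOp V w := by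
  unfold fnWordOp
  rw [List.ofFn_succ]
  simp [aux_wordOp_cons]

lemma aux_fnWordOp_succ {ι : Type*} {k : ℕ} (V : ι → E →L[ℂ] E)
    (u : Fin (k + 1) → ι) :
    fnWordOp V u = V (u 0) * fnWordOp V (fun i => u i.succ) := by
  unfold fnWordOp
  rw [List.ofFn_succ]
  simp [aux_wordOp_cons]

lemma aux_rowsum [CompleteSpace E] {ι : Type*} [Fintype ι] (V : ι → E →L[ℂ] E)
    (hV : ∑ a, V a * star (V a) = 1) (k : ℕ) :
    ∑ u : Fin k → ι, fnWordOp V u * star (fnWordOp V u) = 1 := by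
  induction k with
  | zero =>
      have h1 : ∀ u : Fin 0 → ι, fnWordOp V u = 1 := fun u => by
        simp [fnWordOp, wordOp]
      simp [h1]
  | succ k ih =>
      rw [← Equiv.sum_comp (Fin.consEquiv fun _ => ι)
        (fun u => fnWordOp V u * star (fnWordOp V u)), Fintype.sum_prod_type]
      have h1 : ∀ (a : ι) (w : Fin k → ι),
          fnWordOp V ((Fin.consEquiv fun _ => ι) (a, w)) *
            star (fnWordOp V ((Fin.consEquiv fun _ => ι) (a, w))) =
          V a * ((fnWordOp V w * star (fnWordOp V w)) * star (V a)) := by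
        intro a w
        have : (Fin.consEquiv fun _ => ι) (a, w) = Fin.cons a w := rfl
        rw [this, aux_fnWordOp_cons, star_mul]
        simp [mul_assoc]
      calc (∑ a : ι, ∑ w : Fin k → ι,
            fnWordOp V ((Fin.consEquiv fun _ => ι) (a, w)) *
              star (fnWordOp V ((Fin.consEquiv fun _ => ι) (a, w))))
          = ∑ a : ι, V a * ((∑ w : Fin k → ι,
              fnWordOp V w * star (fnWordOp V w)) * star (V a)) := by
            refine Finset.sum_congr rfl fun a _ => ?_
            rw [Finset.sum_mul, Finset.mul_sum]
            exact Finset.sum_congr rfl fun w _ => h1 a w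
        _ = 1 := by rw [ih]; simpa using hV

end Aux14

namespace TwoGraphRep

variable {m n : ℕ} {θ : Equiv.Perm (Fin m × Fin n)} {H : Type*}
  [NormedAddCommGroup H] [InnerProductSpace ℂ H] [CompleteSpace H]

lemma aux_rowKL_sum (ρ : TwoGraphRep m n θ H) (hC : ρ.CuntzType) (k l : ℕ) :
    ∑ p : (Fin k → Fin m) × (Fin l → Fin n),
      ρ.rowKL k l p * star (ρ.rowKL k l p) = 1 := by
  have hS := aux_rowsum ρ.S hC.1 k
  have hT := aux_rowsum ρ.T hC.2 l
  rw [Fintype.sum_prod_type]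
  have h1 : ∀ (u : Fin k → Fin m) (v : Fin l → Fin n),
      ρ.rowKL k l (u, v) * star (ρ.rowKL k l (u, v)) =
        fnWordOp ρ.S u * ((fnWordOp ρ.T v * star (fnWordOp ρ.T v)) *
          star (fnWordOp ρ.S u)) := by
    intro u v
    simp only [rowKL, star_mul]
    simp [mul_assoc]
  calc (∑ u : Fin k → Fin m, ∑ v : Fin l → Fin n,
        ρ.rowKL k l (u, v) * star (ρ.rowKL k l (u, v)))
      = ∑ u : Fin k → Fin m, fnWordOp ρ.S u *
          ((∑ v : Fin l → Fin n, fnWordOp ρ.T v * star (fnWordOp ρ.T v)) *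
            star (fnWordOp ρ.S u)) := by
        refine Finset.sum_congr rfl fun u _ => ?_
        rw [Finset.sum_mul, Finset.mul_sum]
        exact Finset.sum_congr rfl fun v _ => h1 u v
    _ = 1 := by rw [hT]; simpa using hS

lemma aux_decomp (ρ : TwoGraphRep m n θ H) (hC : ρ.CuntzType) (k l : ℕ)
    (X : H →L[ℂ] H) :
    X = ∑ p : (Fin k → Fin m) × (Fin l → Fin n),
      (X * ρ.rowKL k l p) * star (ρ.rowKL k l p) := by
  calc X = X * 1 := (mul_one X).symm
    _ = X * ∑ p : (Fin k → Fin m) × (Fin l → Fin n),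
          ρ.rowKL k l p * star (ρ.rowKL k l p) := by rw [aux_rowKL_sum ρ hC k l]
    _ = ∑ p : (Fin k → Fin m) × (Fin l → Fin n),
          (X * ρ.rowKL k l p) * star (ρ.rowKL k l p) := by
        rw [Finset.mul_sum]
        exact Finset.sum_congr rfl fun p _ => by rw [mul_assoc]

lemma aux_comm_single (ρ : TwoGraphRep m n θ H) (i : Fin m) (v : List (Fin n)) :
    ∃ (i' : Fin m) (v' : List (Fin n)), v'.length = v.length ∧
      ρ.S i * wordOp ρ.T v = wordOp ρ.T v' * ρ.S i' := by
  induction v generalizing i with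
  | nil => exact ⟨i, [], rfl, by simp [aux_wordOp_nil]⟩
  | cons j v ih =>
      obtain ⟨i', v', hlen, hcomm⟩ := ih (θ (i, j)).1
      refine ⟨i', (θ (i, j)).2 :: v', by simp [hlen], ?_⟩
      rw [aux_wordOp_cons, aux_wordOp_cons, ← mul_assoc, ρ.comm i j, mul_assoc,
        hcomm, ← mul_assoc]

lemma aux_comm_word (ρ : TwoGraphRep m n θ H) (u : List (Fin m))
    (v : List (Fin n)) :
    ∃ (u' : List (Fin m)) (v' : List (Fin n)), u'.length = u.length ∧
      v'.length = v.length ∧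
      wordOp ρ.S u * wordOp ρ.T v = wordOp ρ.T v' * wordOp ρ.S u' := by
  induction u with
  | nil => exact ⟨[], v, rfl, rfl, by simp [aux_wordOp_nil]⟩
  | cons i u ih =>
      obtain ⟨u', v', h1, h2, h3⟩ := ih
      obtain ⟨i', v'', hl, hc⟩ := ρ.aux_comm_single i v'
      refine ⟨i' :: u', v'', by simp [h1], by rw [hl, h2], ?_⟩
      rw [aux_wordOp_cons, mul_assoc, h3, ← mul_assoc, hc, mul_assoc,
        ← aux_wordOp_cons]

lemma aux_wordOpS_mem (ρ : TwoGraphRep m n θ H) (w : List (Fin m)) :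
    wordOp ρ.S w ∈ Algebra.adjoin ℂ (Set.range ρ.S ∪ Set.range ρ.T) := by
  induction w with
  | nil => exact one_mem _
  | cons i w ih =>
      rw [aux_wordOp_cons]
      exact mul_mem (Algebra.subset_adjoin (Or.inl ⟨i, rfl⟩)) ih

lemma aux_wordOpT_mem (ρ : TwoGraphRep m n θ H) (w : List (Fin n)) :
    wordOp ρ.T w ∈ Algebra.adjoin ℂ (Set.range ρ.S ∪ Set.range ρ.T) := by
  induction w with
  | nil => exact one_mem _
  | cons j w ih =>
      rw [aux_wordOp_cons]
      exact mul_mem (Algebra.subset_adjoin (Or.inr ⟨j, rfl⟩)) ih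

end TwoGraphRep

/-- If `𝔖_{k,l}` is self-adjoint for some `k, l > 0`, then `𝔖` is self-adjoint. -/
theorem statement14 {m n : ℕ} (hm : 0 < m) (hn : 0 < n) (hmn : 2 ≤ m ∨ 2 ≤ n)
    {θ : Equiv.Perm (Fin m × Fin n)} {H : Type*}
    [NormedAddCommGroup H] [InnerProductSpace ℂ H] [CompleteSpace H]
    (ρ : TwoGraphRep m n θ H) (hCuntz : ρ.CuntzType)
    (k l : ℕ) (hk : 0 < k) (hl : 0 < l)
    (hsa : ∀ A ∈ genWotAlg (Set.range (ρ.rowKL k l)),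
      star A ∈ genWotAlg (Set.range (ρ.rowKL k l))) :
    ∀ A ∈ ρ.alg, star A ∈ ρ.alg := by
  classical
  have hrowmem : Set.range (ρ.rowKL k l) ⊆
      (Algebra.adjoin ℂ (Set.range ρ.S ∪ Set.range ρ.T) :
        Subalgebra ℂ (H →L[ℂ] H)) := by
    rintro _ ⟨p, rfl⟩
    exact mul_mem (ρ.aux_wordOpS_mem (List.ofFn p.1)) (ρ.aux_wordOpT_mem (List.ofFn p.2))
  have hstarRow : ∀ p, star (ρ.rowKL k l p) ∈ ρ.alg := by
    intro p
    have h1 : ρ.rowKL k l p ∈ genWotAlg (Set.range (ρ.rowKL k l)) :=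
      aux_mem_genWotAlg_of_adjoin (Algebra.subset_adjoin ⟨p, rfl⟩)
    exact aux_genWotAlg_le hrowmem (hsa _ h1)
  obtain ⟨k', rfl⟩ : ∃ k', k = k' + 1 := ⟨k - 1, by omega⟩
  obtain ⟨l', rfl⟩ : ∃ l', l = l' + 1 := ⟨l - 1, by omega⟩
  have hstarS : ∀ i, star (ρ.S i) ∈ ρ.alg := by
    intro i
    rw [ρ.aux_decomp hCuntz (k' + 1) (l' + 1) (star (ρ.S i))]
    apply aux_genWotAlg_sum
    intro p _
    apply aux_genWotAlg_mul _ (hstarRow p)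
    apply aux_mem_genWotAlg_of_adjoin
    obtain ⟨u, v⟩ := p
    have e : star (ρ.S i) * ρ.rowKL (k' + 1) (l' + 1) (u, v)
        = (star (ρ.S i) * ρ.S (u 0)) *
          (fnWordOp ρ.S (fun t => u t.succ) * fnWordOp ρ.T v) := by
      show star (ρ.S i) * (fnWordOp ρ.S u * fnWordOp ρ.T v) = _
      rw [aux_fnWordOp_succ ρ.S u]
      simp [mul_assoc]
    rw [e, ρ.isometS i (u 0)]
    split_ifs
    · rw [one_mul]
      exact mul_mem (ρ.aux_wordOpS_mem (List.ofFn fun t => u t.succ))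
        (ρ.aux_wordOpT_mem (List.ofFn v))
    · rw [zero_mul]; exact zero_mem _
  have hstarT : ∀ j, star (ρ.T j) ∈ ρ.alg := by
    intro j
    rw [ρ.aux_decomp hCuntz (k' + 1) (l' + 1) (star (ρ.T j))]
    apply aux_genWotAlg_sum
    intro p _
    apply aux_genWotAlg_mul _ (hstarRow p)
    apply aux_mem_genWotAlg_of_adjoin
    obtain ⟨u, v⟩ := p
    obtain ⟨u', v', hu', hv', hcomm⟩ := ρ.aux_comm_word (List.ofFn u) (List.ofFn v)
    rw [List.length_ofFn] at hv'
    cases v' with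
    | nil => simp at hv'
    | cons j0 vrest =>
        have e : star (ρ.T j) * ρ.rowKL (k' + 1) (l' + 1) (u, v)
            = (star (ρ.T j) * ρ.T j0) * (wordOp ρ.T vrest * wordOp ρ.S u') := by
          show star (ρ.T j) *
              (wordOp ρ.S (List.ofFn u) * wordOp ρ.T (List.ofFn v)) = _
          rw [hcomm, aux_wordOp_cons]
          simp [mul_assoc]
        rw [e, ρ.isometT j j0]
        split_ifs
        · rw [one_mul]
          exact mul_mem (ρ.aux_wordOpT_mem vrest) (ρ.aux_wordOpS_mem u')
        · rw [zero_mul]; exact zero_mem _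
  have key : ∀ x ∈ Algebra.adjoin ℂ (Set.range ρ.S ∪ Set.range ρ.T),
      star x ∈ ρ.alg := by
    intro x hx
    induction hx using Algebra.adjoin_induction with
    | mem x hx =>
        rcases hx with ⟨i, rfl⟩ | ⟨j, rfl⟩
        · exact hstarS i
        · exact hstarT j
    | algebraMap r =>
        have e : star ((algebraMap ℂ (H →L[ℂ] H)) r) =
            (algebraMap ℂ (H →L[ℂ] H)) (starRingEnd ℂ r) := by
          rw [Algebra.algebraMap_eq_smul_one, Algebra.algebraMap_eq_smul_one,
            star_smul, star_one]
          rfl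
        rw [e]
        exact aux_mem_genWotAlg_of_adjoin (Subalgebra.algebraMap_mem _ _)
    | add x y hx hy ihx ihy => rw [star_add]; exact aux_genWotAlg_add ihx ihy
    | mul x y hx hy ihx ihy => rw [star_mul]; exact aux_genWotAlg_mul ihy ihx
  intro A hA
  have h2 : star A ∈ wotClosure
      (star '' ((Algebra.adjoin ℂ (Set.range ρ.S ∪ Set.range ρ.T) :
        Subalgebra ℂ (H →L[ℂ] H)) : Set (H →L[ℂ] H))) :=
    aux_wotClosure_star hA
  have h3 : (star '' ((Algebra.adjoin ℂ (Set.range ρ.S ∪ Set.range ρ.T) :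
      Subalgebra ℂ (H →L[ℂ] H)) : Set (H →L[ℂ] H))) ⊆ ρ.alg := by
    rintro _ ⟨x, hx, rfl⟩
    exact key x hx
  exact aux_wotClosure_idem (aux_wotClosure_mono h3 h2)
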